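/- With A as the 3×4 matrix with columns (1,0,0),(0,1,0),(0,0,1),(−1,1,1) and β = (β₁,0,1), the operator U = −(x₁x₄ − x₂x₃)∂₄ + (β₁+1)x₁ satisfies U·∂₁ − β₁(β₁+1) ∈ H_A((β₁,0,1)), where H_A(β) is the GKZ ideal generated by ∂₁∂₂ − ∂₃∂₄ and the Euler operators x₁∂₁ − x₄∂₄ − β₁, x₂∂₂ + x₄∂₄, x₃∂₃ + x₄∂₄ − 1. -/

import Mathlib

/-- The polynomial ring `ℂ[x₁,x₂,x₃,x₄]` on which the Weyl algebra `D₄` acts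
faithfully. -/
noncomputable abbrev P4 := MvPolynomial (Fin 4) ℂ

/-- Multiplication by `xᵢ`. -/
noncomputable def Xi (i : Fin 4) : Module.End ℂ P4 :=
  LinearMap.mulLeft ℂ (MvPolynomial.X i)

/-- The partial derivative `∂ᵢ`. -/
noncomputable def Di (i : Fin 4) : Module.End ℂ P4 :=
  (MvPolynomial.pderiv i).toLinearMap

/-- The Weyl algebra `D₄`, realized as the subalgebra of endomorphisms generated
by the `xᵢ` and `∂ᵢ`. -/
noncomputable def weyl4 : Subalgebra ℂ (Module.End ℂ P4) :=
  Algebra.adjoin ℂ (Set.range Xi ∪ Set.range Di)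

lemma Xi_comm (i j : Fin 4) : Xi i * Xi j = Xi j * Xi i := by
  apply LinearMap.ext; intro p
  simp only [Xi, Module.End.mul_apply, LinearMap.mulLeft_apply]
  ring

lemma Xi_comm' (i j : Fin 4) (t : Module.End ℂ P4) :
    Xi i * (Xi j * t) = Xi j * (Xi i * t) := by
  rw [← mul_assoc, Xi_comm, mul_assoc]

lemma Di_Xi_ne (i j : Fin 4) (h : j ≠ i) : Di i * Xi j = Xi j * Di i := by
  apply LinearMap.ext; intro p
  simp [Di, Xi, Module.End.mul_apply, MvPolynomial.pderiv_mul,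
    MvPolynomial.pderiv_X_of_ne h]

lemma Di_Xi_ne' (i j : Fin 4) (h : j ≠ i) (t : Module.End ℂ P4) :
    Di i * (Xi j * t) = Xi j * (Di i * t) := by
  rw [← mul_assoc, Di_Xi_ne i j h, mul_assoc]

lemma Di_Xi_self (i : Fin 4) : Di i * Xi i = Xi i * Di i + 1 := by
  apply LinearMap.ext; intro p
  simp [Di, Xi, Module.End.mul_apply, MvPolynomial.pderiv_mul]

lemma Di_Xi_self' (i : Fin 4) (t : Module.End ℂ P4) :
    Di i * (Xi i * t) = Xi i * (Di i * t) + t := by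
  rw [← mul_assoc, Di_Xi_self, add_mul, one_mul, mul_assoc]

lemma pderiv_comm' (i j : Fin 4) (p : P4) :
    MvPolynomial.pderiv i (MvPolynomial.pderiv j p)
      = MvPolynomial.pderiv j (MvPolynomial.pderiv i p) := by
  induction p using MvPolynomial.induction_on with
  | C a => simp
  | add p q hp hq => simp [hp, hq]
  | mul_X p k hp =>
      by_cases hik : k = i <;> by_cases hjk : k = j <;> subst_vars <;>
        simp [MvPolynomial.pderiv_mul, MvPolynomial.pderiv_X_of_ne,
          MvPolynomial.pderiv_X_self, hp, *] <;> ring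

lemma Di_comm (i j : Fin 4) : Di i * Di j = Di j * Di i := by
  apply LinearMap.ext; intro p
  exact pderiv_comm' i j p

lemma Di_comm' (i j : Fin 4) (t : Module.End ℂ P4) :
    Di i * (Di j * t) = Di j * (Di i * t) := by
  rw [← mul_assoc, Di_comm, mul_assoc]


lemma my_neg_mul (a b : Module.End ℂ P4) : -a * b = -(a * b) := neg_mul a b
lemma my_mul_neg (a b : Module.End ℂ P4) : a * -b = -(a * b) := mul_neg a b
lemma my_neg_smul (c : ℂ) (a : Module.End ℂ P4) : (-c) • a = -(c • a) := neg_smul c a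
lemma my_smul_neg (c : ℂ) (a : Module.End ℂ P4) : c • (-a) = -(c • a) := smul_neg c a
lemma my_neg_add (a b : Module.End ℂ P4) : -(a + b) = -a + -b := neg_add a b
lemma my_neg_sub (a b : Module.End ℂ P4) : -(a - b) = -a + b := by
  rw [neg_sub, sub_eq_add_neg, add_comm]
lemma my_neg_neg (a : Module.End ℂ P4) : -(-a) = a := neg_neg a

set_option maxHeartbeats 2000000 in
/-- for the GKZ system with
`A` having columns `(1,0,0),(0,1,0),(0,0,1),(−1,1,1)` and `β = (β₁,0,1)`,
the operator `U = −(x₁x₄ − x₂x₃)∂₄ + (β₁+1)x₁` satisfies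
`U·∂₁ − β₁(β₁+1) ∈ H_A((β₁,0,1))`, i.e. it is a left `D₄`-combination of the
generators `∂₁∂₂ − ∂₃∂₄`, `x₁∂₁ − x₄∂₄ − β₁`, `x₂∂₂ + x₄∂₄`, `x₃∂₃ + x₄∂₄ − 1`. -/
theorem U_contiguity_in_GKZ_ideal (β₁ : ℂ) :
    ∃ q₀ q₁ q₂ q₃ : Module.End ℂ P4,
      q₀ ∈ weyl4 ∧ q₁ ∈ weyl4 ∧ q₂ ∈ weyl4 ∧ q₃ ∈ weyl4 ∧
      (-(Xi 0 * Xi 3 - Xi 1 * Xi 2) * Di 3 + (β₁ + 1) • Xi 0) * Di 0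
          - (β₁ * (β₁ + 1)) • 1
        = q₀ * (Di 0 * Di 1 - Di 2 * Di 3)
          + q₁ * (Xi 0 * Di 0 - Xi 3 * Di 3 - β₁ • 1)
          + q₂ * (Xi 1 * Di 1 + Xi 3 * Di 3)
          + q₃ * (Xi 2 * Di 2 + Xi 3 * Di 3 - 1) := by
  have hX : ∀ i, Xi i ∈ weyl4 := fun i =>
    Algebra.subset_adjoin (Or.inl ⟨i, rfl⟩)
  have hD : ∀ i, Di i ∈ weyl4 := fun i =>
    Algebra.subset_adjoin (Or.inr ⟨i, rfl⟩)
  refine ⟨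
    -(1/2 : ℂ) • (Xi 2 * Xi 3) + (1/2 : ℂ) • (Xi 2 * Xi 3 * Xi 3 * Di 3) + (1/2 : ℂ) • (Xi 2 * Xi 2 * Xi 3 * Di 2) + -(1/2 : ℂ) • (Xi 1 * Xi 2 * Xi 2 * Di 0) + (1/2 : ℂ) • (Xi 1 * Xi 2 * Xi 2 * Xi 3 * Di 0 * Di 3) + (1/2 : ℂ) • (Xi 1 * Xi 2 * Xi 2 * Xi 2 * Di 0 * Di 2) + (-1 : ℂ) • (Xi 1 * Xi 1 * Xi 2 * Di 3) + -(1/2 : ℂ) • (Xi 1 * Xi 1 * Xi 2 * Xi 3 * Di 3 * Di 3) + -(1/2 : ℂ) • (Xi 1 * Xi 1 * Xi 2 * Xi 2 * Di 2 * Di 3),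
    (β₁ + 1) • 1 - Xi 3 * Di 3,
    Xi 1 * Xi 2 * (Di 0 * Di 3),
    (-1 : ℂ) • (Xi 3 * Di 3) + (1/2 : ℂ) • (Xi 2 * Xi 3 * Di 2 * Di 3) + -(1/2 : ℂ) • (Xi 2 * Xi 3 * Di 0 * Di 1) + (-1 : ℂ) • (Xi 1 * Xi 2 * Di 0 * Di 3) + (1/2 : ℂ) • (Xi 1 * Xi 2 * Xi 2 * Di 0 * Di 2 * Di 3) + -(1/2 : ℂ) • (Xi 1 * Xi 2 * Xi 2 * Di 0 * Di 0 * Di 1) + -(1/2 : ℂ) • (Xi 1 * Xi 1 * Xi 2 * Di 2 * Di 3 * Di 3) + (1/2 : ℂ) • (Xi 1 * Xi 1 * Xi 2 * Di 0 * Di 1 * Di 3),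
    ?_, ?_, ?_, ?_, ?_⟩
  · repeat'
      first
        | with_reducible exact hX _
        | exact hD _
        | exact Subalgebra.one_mem _
        | apply Subalgebra.smul_mem
        | apply Subalgebra.neg_mem
        | apply Subalgebra.add_mem
        | apply Subalgebra.sub_mem
        | apply Subalgebra.mul_mem
  · repeat'
      first
        | with_reducible exact hX _
        | exact hD _
        | exact Subalgebra.one_mem _
        | apply Subalgebra.smul_mem
        | apply Subalgebra.neg_mem
        | apply Subalgebra.add_mem
        | apply Subalgebra.sub_mem
        | apply Subalgebra.mul_mem
  · repeat'
      first
        | with_reducible exact hX _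
        | exact hD _
        | exact Subalgebra.one_mem _
        | apply Subalgebra.smul_mem
        | apply Subalgebra.neg_mem
        | apply Subalgebra.add_mem
        | apply Subalgebra.sub_mem
        | apply Subalgebra.mul_mem
  · repeat'
      first
        | with_reducible exact hX _
        | exact hD _
        | exact Subalgebra.one_mem _
        | apply Subalgebra.smul_mem
        | apply Subalgebra.neg_mem
        | apply Subalgebra.add_mem
        | apply Subalgebra.sub_mem
        | apply Subalgebra.mul_mem
  · simp only [mul_add, mul_sub, add_mul, sub_mul, mul_assoc, mul_one, one_mul,
      my_neg_mul, my_mul_neg, my_neg_smul, my_smul_neg, my_neg_add, my_neg_sub, my_neg_neg, smul_mul_assoc, mul_smul_comm, smul_smul,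
      smul_add, smul_sub, 
      Di_Xi_self 0, Di_Xi_self 1, Di_Xi_self 2, Di_Xi_self 3,
      Di_Xi_self' 0, Di_Xi_self' 1, Di_Xi_self' 2, Di_Xi_self' 3,
      Di_Xi_ne 0 1 (by decide), Di_Xi_ne 0 2 (by decide), Di_Xi_ne 0 3 (by decide),
      Di_Xi_ne 1 0 (by decide), Di_Xi_ne 1 2 (by decide), Di_Xi_ne 1 3 (by decide),
      Di_Xi_ne 2 0 (by decide), Di_Xi_ne 2 1 (by decide), Di_Xi_ne 2 3 (by decide),
      Di_Xi_ne 3 0 (by decide), Di_Xi_ne 3 1 (by decide), Di_Xi_ne 3 2 (by decide),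
      Di_Xi_ne' 0 1 (by decide), Di_Xi_ne' 0 2 (by decide), Di_Xi_ne' 0 3 (by decide),
      Di_Xi_ne' 1 0 (by decide), Di_Xi_ne' 1 2 (by decide), Di_Xi_ne' 1 3 (by decide),
      Di_Xi_ne' 2 0 (by decide), Di_Xi_ne' 2 1 (by decide), Di_Xi_ne' 2 3 (by decide),
      Di_Xi_ne' 3 0 (by decide), Di_Xi_ne' 3 1 (by decide), Di_Xi_ne' 3 2 (by decide),
      Xi_comm 1 0, Xi_comm 2 0, Xi_comm 2 1, Xi_comm 3 0, Xi_comm 3 1, Xi_comm 3 2,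
      Xi_comm' 1 0, Xi_comm' 2 0, Xi_comm' 2 1, Xi_comm' 3 0, Xi_comm' 3 1, Xi_comm' 3 2,
      Di_comm 1 0, Di_comm 2 0, Di_comm 2 1, Di_comm 3 0, Di_comm 3 1, Di_comm 3 2,
      Di_comm' 1 0, Di_comm' 2 0, Di_comm' 2 1, Di_comm' 3 0, Di_comm' 3 1, Di_comm' 3 2]
    module
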